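/- Let L be an n×n integer matrix. Then L is an ICB matrix if and only if L is a CB matrix and every set of n−1 of the rows of L is linearly independent over ℚ. -/

import Mathlib

open Finset

/-- A critical binomial (CB) matrix. -/
def IsCB (n : ℕ) (L : Matrix (Fin n) (Fin n) ℤ) : Prop :=
  (∀ i, 0 < L i i) ∧ (∀ i j : Fin n, i ≠ j → L i j ≤ 0) ∧ (∀ i, ∑ j, L i j = 0) ∧
    (∀ j, ∃ i, i ≠ j ∧ L i j ≠ 0)

/-- Irreducibility of a square matrix. -/
def IsIrreducibleMat {n : ℕ} (M : Matrix (Fin n) (Fin n) ℤ) : Prop :=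
  ¬ ∃ I J : Set (Fin n), I.Nonempty ∧ J.Nonempty ∧ Disjoint I J ∧ I ∪ J = Set.univ ∧
      ∀ i ∈ I, ∀ j ∈ J, M i j = 0

def IsICB (n : ℕ) (L : Matrix (Fin n) (Fin n) ℤ) : Prop := IsCB n L ∧ IsIrreducibleMat L

/-- Maximum principle: a left-kernel vector of an irreducible CB matrix that vanishes
somewhere is nonpositive everywhere. -/
lemma icb_left_kernel_nonpos (n : ℕ) (L : Matrix (Fin n) (Fin n) ℤ)
    (hoff : ∀ i j : Fin n, i ≠ j → L i j ≤ 0)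
    (hrow : ∀ i, ∑ j, L i j = 0) (hIrr : IsIrreducibleMat L) (c : Fin n → ℚ)
    (h0 : ∀ k, ∑ j, c j * (L j k : ℚ) = 0) (i : Fin n) (hci : c i = 0) :
    ∀ j, c j ≤ 0 := by
  classical
  by_contra h
  push_neg at h
  obtain ⟨j₀, hj₀⟩ := h
  set P : Finset (Fin n) := univ.filter (fun j => 0 < c j) with hPdef
  have memP : ∀ j, j ∈ P ↔ 0 < c j := by intro j; simp [hPdef]
  have hj₀P : j₀ ∈ P := (memP j₀).2 hj₀
  have hiP : i ∉ P := by simp [memP, hci]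
  have hrowQ : ∀ j, ∑ k, (L j k : ℚ) = 0 := by
    intro j; exact_mod_cast hrow j
  have hedge : ∃ a ∈ P, ∃ b, b ∉ P ∧ L a b ≠ 0 := by
    by_contra hc
    push_neg at hc
    refine hIrr ⟨(P : Set (Fin n)), ((Pᶜ : Finset (Fin n)) : Set (Fin n)),
      ⟨j₀, by simpa using hj₀P⟩, ⟨i, by simpa using hiP⟩, ?_, ?_, ?_⟩
    · rw [Finset.disjoint_coe]
      exact disjoint_compl_right
    · ext x
      by_cases hx : x ∈ P <;> simp [hx]
    · intro a ha b hb
      exact hc a (by simpa using ha) b (by simpa using hb)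
  obtain ⟨a, haP, b, hbP, hab⟩ := hedge
  have hsum : ∑ j, c j * (∑ k ∈ P, (L j k : ℚ)) = 0 := by
    calc ∑ j, c j * (∑ k ∈ P, (L j k : ℚ))
        = ∑ j, ∑ k ∈ P, c j * (L j k : ℚ) := by simp [Finset.mul_sum]
      _ = ∑ k ∈ P, ∑ j, c j * (L j k : ℚ) := Finset.sum_comm
      _ = 0 := by simp [h0]
  have hnonneg : ∀ j, 0 ≤ c j * (∑ k ∈ P, (L j k : ℚ)) := by
    intro j
    by_cases hj : j ∈ P
    · have hcompl : ∑ k ∈ Pᶜ, (L j k : ℚ) ≤ 0 := by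
        apply Finset.sum_nonpos
        intro k hk
        have hkj : j ≠ k := by
          intro h; rw [h] at hj; exact (Finset.mem_compl.1 hk) hj
        exact_mod_cast hoff j k hkj
      have hPsum : (0:ℚ) ≤ ∑ k ∈ P, (L j k : ℚ) := by
        have h2 := Finset.sum_add_sum_compl P (fun k => (L j k : ℚ))
        rw [hrowQ j] at h2
        linarith
      exact mul_nonneg (le_of_lt ((memP j).1 hj)) hPsum
    · have hcj : c j ≤ 0 := not_lt.1 (fun h => hj ((memP j).2 h))
      have hPle : ∑ k ∈ P, (L j k : ℚ) ≤ 0 := by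
        apply Finset.sum_nonpos
        intro k hk
        have hkj : j ≠ k := by
          intro h; rw [h] at hj; exact hj hk
        exact_mod_cast hoff j k hkj
      nlinarith
  have hpos : 0 < c a * (∑ k ∈ P, (L a k : ℚ)) := by
    have hca : 0 < c a := (memP a).1 haP
    have hbC : b ∈ Pᶜ := Finset.mem_compl.2 hbP
    have hcompl_lt : ∑ k ∈ Pᶜ, (L a k : ℚ) < 0 := by
      have hLab : (L a b : ℚ) < 0 := by
        have h1 : L a b ≤ 0 := hoff a b (by
          intro h; rw [h] at haP; exact hbP haP)
        have : L a b < 0 := lt_of_le_of_ne h1 hab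
        exact_mod_cast this
      have herase : ∑ k ∈ Pᶜ.erase b, (L a k : ℚ) ≤ 0 := by
        apply Finset.sum_nonpos
        intro k hk
        have hkP : k ∉ P := Finset.mem_compl.1 (Finset.mem_of_mem_erase hk)
        have hak : a ≠ k := by
          intro h; rw [h] at haP; exact hkP haP
        exact_mod_cast hoff a k hak
      have := Finset.sum_erase_add Pᶜ (fun k => (L a k : ℚ)) hbC
      linarith
    have hPpos : (0:ℚ) < ∑ k ∈ P, (L a k : ℚ) := by
      have h2 := Finset.sum_add_sum_compl P (fun k => (L a k : ℚ))
      rw [hrowQ a] at h2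
      linarith
    exact mul_pos hca hPpos
  have : (0:ℚ) < ∑ j, c j * (∑ k ∈ P, (L j k : ℚ)) :=
    Finset.sum_pos' (fun j _ => hnonneg j) ⟨a, Finset.mem_univ a, hpos⟩
  linarith [hsum]

/-- An `n × n` integer matrix `L` is an ICB matrix if and only if it is a
CB matrix and every set of `n - 1` of its rows is linearly independent over `ℚ`. -/
theorem isICB_iff_isCB_and_rows_linearIndependent (n : ℕ) (hn : 3 ≤ n)
    (L : Matrix (Fin n) (Fin n) ℤ) :
    IsICB n L ↔ IsCB n L ∧
      ∀ i : Fin n, LinearIndependent ℚ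
        (fun j : {j : Fin n // j ≠ i} => fun k : Fin n => (L j.1 k : ℚ)) := by
  classical
  constructor
  · rintro ⟨hCB, hIrr⟩
    obtain ⟨hdiag, hoff, hrow, hcol⟩ := hCB
    refine ⟨⟨hdiag, hoff, hrow, hcol⟩, fun i => ?_⟩
    rw [Fintype.linearIndependent_iff]
    intro g hg j
    set c : Fin n → ℚ := fun j => if h : j = i then 0 else g ⟨j, h⟩ with hcdef
    have hci : c i = 0 := by simp [hcdef]
    have h0 : ∀ k, ∑ j, c j * (L j k : ℚ) = 0 := by
      intro k
      have h1 := congrFun hg k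
      simp only [Finset.sum_apply, Pi.smul_apply, smul_eq_mul, Pi.zero_apply] at h1
      have h2 : ∑ x : {j : Fin n // j ≠ i}, c x.1 * (L x.1 k : ℚ)
          = ∑ x : {j : Fin n // j ≠ i}, g x * (L x.1 k : ℚ) := by
        apply Finset.sum_congr rfl
        intro x _
        simp [hcdef, x.prop]
      have h3 : ∑ j ∈ univ.erase i, c j * (L j k : ℚ)
          = ∑ x : {j : Fin n // j ≠ i}, c x.1 * (L x.1 k : ℚ) := by
        apply Finset.sum_subtype
        intro x
        simp
      have h4 : ∑ j ∈ univ.erase i, c j * (L j k : ℚ) = ∑ j, c j * (L j k : ℚ) :=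
        Finset.sum_erase _ (by simp [hci])
      rw [← h4, h3, h2, h1]
    have hle := icb_left_kernel_nonpos n L hoff hrow hIrr c h0 i hci
    have hge := icb_left_kernel_nonpos n L hoff hrow hIrr (fun j => - c j)
      (by intro k; simp [neg_mul, Finset.sum_neg_distrib, h0]) i (by simp [hci])
    have hc0 : c j.1 = 0 := le_antisymm (hle j.1) (neg_nonpos.1 (hge j.1))
    have : g j = c j.1 := by simp [hcdef, j.prop]
    rw [this, hc0]
  · rintro ⟨hCB, hLI⟩
    obtain ⟨hdiag, hoff, hrow, hcol⟩ := hCB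
    refine ⟨⟨hdiag, hoff, hrow, hcol⟩, ?_⟩
    rintro ⟨I, J, ⟨a₀, ha₀⟩, ⟨b₀, hb₀⟩, hdisj, huniv, hzero⟩
    set S : Finset (Fin n) := univ.filter (· ∈ I) with hSdef
    have memS : ∀ j, j ∈ S ↔ j ∈ I := by intro j; simp [hSdef]
    have ha₀S : a₀ ∈ S := (memS a₀).2 ha₀
    have hb₀S : b₀ ∉ S := by
      rw [memS]
      intro h
      exact (Set.disjoint_left.1 hdisj h) hb₀
    have hJI : ∀ j : Fin n, j ∉ I → j ∈ J := by
      intro j hj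
      have : j ∈ I ∪ J := huniv ▸ Set.mem_univ j
      rcases this with h | h
      · exact absurd h hj
      · exact h
    set M : Matrix S S ℚ := fun a b => (L a.1 b.1 : ℚ) with hMdef
    have hMone : M.mulVec (fun _ => 1) = 0 := by
      funext a
      simp only [Matrix.mulVec, dotProduct, mul_one, hMdef]
      have hcoe : ∑ b : S, (L a.1 b.1 : ℚ) = ∑ b ∈ S, (L a.1 b : ℚ) :=
        Finset.sum_coe_sort S (fun b => (L a.1 b : ℚ))
      rw [hcoe]
      have hcompl : ∑ b ∈ Sᶜ, (L a.1 b : ℚ) = 0 := by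
        apply Finset.sum_eq_zero
        intro b hb
        have hbJ : b ∈ J := hJI b (by
          intro h; exact (Finset.mem_compl.1 hb) ((memS b).2 h))
        have := hzero a.1 ((memS a.1).1 a.2) b hbJ
        exact_mod_cast this
      have htot : ∑ b, (L a.1 b : ℚ) = 0 := by exact_mod_cast hrow a.1
      have h2 := Finset.sum_add_sum_compl S (fun b => (L a.1 b : ℚ))
      rw [htot, hcompl] at h2
      simpa using h2
    have hNE : Nonempty S := ⟨⟨a₀, ha₀S⟩⟩
    have hdet : M.det = 0 := by
      rw [← Matrix.exists_mulVec_eq_zero_iff]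
      refine ⟨fun _ => 1, ?_, hMone⟩
      intro h
      have := congrFun h ⟨a₀, ha₀S⟩
      simp at this
    have hdetT : M.transpose.det = 0 := by rw [Matrix.det_transpose]; exact hdet
    obtain ⟨v, hv, hvker⟩ := (Matrix.exists_mulVec_eq_zero_iff).2 hdetT
    -- v is a nonzero left kernel vector of M
    have hvL : ∀ k ∈ S, ∑ a : S, v a * (L a.1 k : ℚ) = 0 := by
      intro k hk
      have := congrFun hvker ⟨k, hk⟩
      simp only [Matrix.mulVec, dotProduct, Matrix.transpose_apply, Pi.zero_apply,
        hMdef] at this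
      rw [← this]
      apply Finset.sum_congr rfl
      intro a _
      exact mul_comm _ _
    -- build the dependence among the rows other than b₀
    obtain ⟨a₁, ha₁⟩ : ∃ a : S, v a ≠ 0 := by
      by_contra hc
      push_neg at hc
      exact hv (funext hc)
    have hne : ∀ a : S, (a : Fin n) ≠ b₀ := by
      intro a h
      exact hb₀S (h ▸ a.2)
    set c : Fin n → ℚ := fun j => if h : j ∈ S then v ⟨j, h⟩ else 0 with hcdef
    set g : {j : Fin n // j ≠ b₀} → ℚ := fun j => c j.1 with hgdef
    have hglin := (Fintype.linearIndependent_iff.1 (hLI b₀)) g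
    have hsum0 : ∑ j : {j : Fin n // j ≠ b₀}, g j • (fun k : Fin n => (L j.1 k : ℚ)) = 0 := by
      funext k
      simp only [Finset.sum_apply, Pi.smul_apply, smul_eq_mul, Pi.zero_apply]
      have h3 : ∑ j ∈ univ.erase b₀, c j * (L j k : ℚ)
          = ∑ x : {j : Fin n // j ≠ b₀}, g x * (L x.1 k : ℚ) := by
        apply Finset.sum_subtype
        intro x
        simp
      have h4 : ∑ j ∈ univ.erase b₀, c j * (L j k : ℚ) = ∑ j, c j * (L j k : ℚ) :=
        Finset.sum_erase _ (by simp [hcdef, hb₀S])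
      rw [← h3, h4]
      have h5 : ∑ j, c j * (L j k : ℚ) = ∑ j ∈ S, c j * (L j k : ℚ) := by
        symm
        apply Finset.sum_subset (Finset.subset_univ S)
        intro x _ hx
        simp [hcdef, hx]
      rw [h5]
      have h6 : ∑ j ∈ S, c j * (L j k : ℚ) = ∑ a : S, v a * (L a.1 k : ℚ) := by
        rw [← Finset.sum_coe_sort S (fun j => c j * (L j k : ℚ))]
        apply Finset.sum_congr rfl
        intro a _
        simp [hcdef]
      rw [h6]
      by_cases hk : k ∈ S
      · exact hvL k hk
      · apply Finset.sum_eq_zero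
        intro a _
        have hkJ : k ∈ J := hJI k (fun h => hk ((memS k).2 h))
        have := hzero a.1 ((memS a.1).1 a.2) k hkJ
        simp [this]
    have := hglin hsum0 ⟨a₁.1, hne a₁⟩
    rw [hgdef] at this
    simp only [hcdef] at this
    rw [dif_pos a₁.2] at this
    exact ha₁ (by simpa using this)
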